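/- For every integer n ≥ 1, all positive V₁,…,Vₙ, all positive R₁,…,Rₙ, every p ∈ (0,1), and every z > 0, there exist a0 > 0 and b0 > 0 with Vᵢ − 1/a0 − 1/b0 > 0 for all i such that f1(a0, b0) < 0 and f2(a0, b0) > 0. (Such a point is obtained, for sufficiently small ε > 0, by taking b0 = 1/ε² and a0 = 1/(V_min − ε − ε²), where V_min = minᵢ Vᵢ.) -/

import Mathlib

set_option maxHeartbeats 1000000


open Finset

/-- The Hamling residual function `f₁`. -/
noncomputable def hamlingF1 (n : ℕ) (V R : Fin n → ℝ) (p : ℝ) (a0 b0 : ℝ) : ℝ :=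
  ((1 - p) / p) * b0 - ∑ i, (1 + b0 / (a0 * R i)) / (V i - 1 / a0 - 1 / b0)

/-- The Hamling residual function `f₂`. -/
noncomputable def hamlingF2 (n : ℕ) (V R : Fin n → ℝ) (p z : ℝ) (a0 b0 : ℝ) : ℝ :=
  b0 / (z * p) - a0 - ∑ i, (1 + a0 * R i / b0) / (V i - 1 / a0 - 1 / b0)

/-- There is a positive feasible point at which `f₁ < 0` and `f₂ > 0`. -/
theorem hamlingOR_point_f1_neg_f2_pos
    (n : ℕ) (hn : 1 ≤ n) (V R : Fin n → ℝ) (hV : ∀ i, 0 < V i) (hR : ∀ i, 0 < R i)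
    (p z : ℝ) (hp0 : 0 < p) (hp1 : p < 1) (hz : 0 < z) :
    ∃ a0 b0 : ℝ, 0 < a0 ∧ 0 < b0 ∧ (∀ i, 0 < V i - 1 / a0 - 1 / b0) ∧
      hamlingF1 n V R p a0 b0 < 0 ∧ 0 < hamlingF2 n V R p z a0 b0 := by
  obtain ⟨j, -, hj⟩ := Finset.exists_min_image Finset.univ V ⟨⟨0, hn⟩, Finset.mem_univ _⟩
  have hj' : ∀ i, V j ≤ V i := fun i => hj i (Finset.mem_univ i)
  have hm : 0 < V j := hV j
  set m := V j with hmdef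
  have hRj : 0 < R j := hR j
  have h1p : 0 < 1 - p := by linarith
  set C := ∑ i : Fin n, (1 + 2 * R i / m) with hCdef
  have hC : 0 ≤ C := Finset.sum_nonneg fun i _ => by have := hR i; positivity
  have hDpos : 0 < 2 / m + C := by positivity
  set K1 := p * m / (4 * (1 - p) * R j) with hK1def
  have hK1 : 0 < K1 := by positivity
  set K2 := 1 / (2 * z * p * (2 / m + C)) with hK2def
  have hK2 : 0 < K2 := by positivity
  set ε := min 1 (min (m / 4) (min K1 K2)) with hεdef
  have hε : 0 < ε := lt_min one_pos (lt_min (by positivity) (lt_min hK1 hK2))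
  have hε1 : ε ≤ 1 := min_le_left _ _
  have hεm : ε ≤ m / 4 := le_trans (min_le_right _ _) (min_le_left _ _)
  have hεK1 : ε ≤ K1 :=
    le_trans (min_le_right _ _) (le_trans (min_le_right _ _) (min_le_left _ _))
  have hεK2 : ε ≤ K2 :=
    le_trans (min_le_right _ _) (le_trans (min_le_right _ _) (min_le_right _ _))
  have hK1' : K1 * (4 * (1 - p) * R j) = p * m := by
    rw [hK1def]; field_simp
  have hK2' : K2 * (2 * z * p * (2 / m + C)) = 1 := by
    rw [hK2def]; field_simp
  have hCsum : C = ∑ i : Fin n, (1 + 2 * R i / m) := hCdef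
  clear hεdef hK1def hK2def hCdef
  clear_value ε K1 K2 C m
  have hε2 : ε ^ 2 ≤ ε := by nlinarith
  have hden : 0 < m - ε - ε ^ 2 := by nlinarith
  have hden2 : m / 2 ≤ m - ε - ε ^ 2 := by nlinarith
  have hDi : ∀ i, V i - 1 / (m - ε - ε ^ 2)⁻¹ - 1 / (ε ^ 2)⁻¹ = V i - m + ε := by
    intro i; rw [one_div, inv_inv, one_div, inv_inv]; ring
  have hfeas : ∀ i, 0 < V i - 1 / (m - ε - ε ^ 2)⁻¹ - 1 / (ε ^ 2)⁻¹ := by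
    intro i; rw [hDi i]; have := hj' i; linarith
  have hinv : (m - ε - ε ^ 2)⁻¹ ≤ 2 / m := by
    have h := inv_anti₀ (by positivity : (0:ℝ) < m / 2) hden2
    rwa [inv_div] at h
  refine ⟨(m - ε - ε ^ 2)⁻¹, (ε ^ 2)⁻¹, inv_pos.mpr hden, by positivity, hfeas, ?_, ?_⟩
  · -- f1 < 0
    rw [hamlingF1, sub_neg]
    have hterm_pos : ∀ i ∈ Finset.univ, (0:ℝ) ≤
        (1 + (ε ^ 2)⁻¹ / ((m - ε - ε ^ 2)⁻¹ * R i)) /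
          (V i - 1 / (m - ε - ε ^ 2)⁻¹ - 1 / (ε ^ 2)⁻¹) := by
      intro i _
      refine div_nonneg ?_ (hfeas i).le
      have := hR i
      positivity
    have hsum := Finset.single_le_sum hterm_pos (Finset.mem_univ j)
    refine lt_of_lt_of_le ?_ hsum
    rw [hDi j, ← hmdef]
    have hεeq : m - m + ε = ε := by ring
    rw [hεeq, lt_div_iff₀ hε]
    have hεK1' : ε * (4 * (1 - p) * R j) ≤ p * m := by
      rw [← hK1']
      exact mul_le_mul_of_nonneg_right hεK1 (by positivity)
    have hexp : (ε ^ 2)⁻¹ / ((m - ε - ε ^ 2)⁻¹ * R j) = (m - ε - ε ^ 2) / (ε ^ 2 * R j) := by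
      field_simp
    rw [hexp]
    have key2 : (1 - p) / p * (ε ^ 2)⁻¹ * ε < (m - ε - ε ^ 2) / (ε ^ 2 * R j) := by
      have hL : (1 - p) / p * (ε ^ 2)⁻¹ * ε = (1 - p) * ε / (p * ε ^ 2) := by
        field_simp
      rw [hL, div_lt_div_iff₀ (by positivity) (by positivity)]
      have h1 := mul_le_mul_of_nonneg_right hεK1' (sq_nonneg ε)
      have h2 := mul_le_mul_of_nonneg_left hden2
        (le_of_lt (mul_pos hp0 (pow_pos hε 2)))
      nlinarith [h1, h2, mul_pos (mul_pos hp0 hm) (pow_pos hε 2)]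
    linarith
  · -- f2 > 0
    rw [hamlingF2, sub_sub, sub_pos]
    have hbound : ∀ i ∈ Finset.univ,
        (1 + (m - ε - ε ^ 2)⁻¹ * R i / (ε ^ 2)⁻¹) /
          (V i - 1 / (m - ε - ε ^ 2)⁻¹ - 1 / (ε ^ 2)⁻¹) ≤ (1 + 2 * R i / m) / ε := by
      intro i _
      rw [hDi i]
      have hnum : 1 + (m - ε - ε ^ 2)⁻¹ * R i / (ε ^ 2)⁻¹ ≤ 1 + 2 * R i / m := by
        have h1 : (m - ε - ε ^ 2)⁻¹ * R i / (ε ^ 2)⁻¹ = (m - ε - ε ^ 2)⁻¹ * R i * ε ^ 2 := by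
          rw [div_eq_mul_inv, inv_inv]
        rw [h1]
        have h2 : (m - ε - ε ^ 2)⁻¹ * R i * ε ^ 2 ≤ 2 / m * R i * 1 := by
          have := hR i
          gcongr
          nlinarith
        have heq : 2 / m * R i * 1 = 2 * R i / m := by ring
        linarith [h2, heq]
      apply div_le_div₀ (by have := hR i; positivity) hnum hε
      have := hj' i; linarith
    have hsumle : ∑ i, (1 + (m - ε - ε ^ 2)⁻¹ * R i / (ε ^ 2)⁻¹) /
          (V i - 1 / (m - ε - ε ^ 2)⁻¹ - 1 / (ε ^ 2)⁻¹) ≤ C / ε := by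
      rw [hCsum, Finset.sum_div]
      exact Finset.sum_le_sum hbound
    have ha0le : (m - ε - ε ^ 2)⁻¹ ≤ (2 / m) / ε := by
      refine hinv.trans ?_
      rw [le_div_iff₀ hε]
      nlinarith [mul_le_mul_of_nonneg_left hε1 (le_of_lt (by positivity : (0:ℝ) < 2 / m))]
    have hfinal : (2 / m) / ε + C / ε < (ε ^ 2)⁻¹ / (z * p) := by
      rw [← add_div, div_lt_div_iff₀ hε (by positivity)]
      have hεK2' : ε * (2 * z * p * (2 / m + C)) ≤ 1 := by
        rw [← hK2']
        exact mul_le_mul_of_nonneg_right hεK2 (by positivity)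
      have hie : (ε ^ 2)⁻¹ * ε = ε⁻¹ := by
        field_simp
      rw [hie, ← one_div, lt_div_iff₀ hε]
      nlinarith [hεK2']
    calc (m - ε - ε ^ 2)⁻¹ + ∑ i, (1 + (m - ε - ε ^ 2)⁻¹ * R i / (ε ^ 2)⁻¹) /
          (V i - 1 / (m - ε - ε ^ 2)⁻¹ - 1 / (ε ^ 2)⁻¹)
        ≤ (2 / m) / ε + C / ε := add_le_add ha0le hsumle
      _ < (ε ^ 2)⁻¹ / (z * p) := hfinal
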